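/- arXiv:1905.09273 — 2 statements merged into one kernel-verified Lean document; each statement's English description precedes it below -/
import Mathlib

section
/- For integers n ≥ 1, -1 ≤ t ≤ n-1, and any integer t', the sum ∑_{s=0}^{n} (-1)^s C(n-t-1, s-t-1) C(n-s, t') equals (-1)^{t+1} δ_{t', n-t-1}. -/
/-- Binomial coefficient C(a,b) for integer arguments, with the convention
    C(a,b) = 0 when b < 0 or b > a. -/
def intChoose (a b : ℤ) : ℤ :=
  if 0 ≤ b ∧ b ≤ a then (a.toNat.choose b.toNat : ℤ) else 0

lemma intChoose_natCast (a b : ℕ) : intChoose (a : ℤ) (b : ℤ) = (a.choose b : ℤ) := by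
  unfold intChoose
  split
  · simp
  · next h =>
    have : a < b := by omega
    rw [Nat.choose_eq_zero_of_lt this]; simp

lemma intChoose_neg (a b : ℤ) (hb : b < 0) : intChoose a b = 0 := by
  unfold intChoose; rw [if_neg (by omega)]

lemma tri (m k j : ℕ) : m.choose k * (m - k).choose j = m.choose j * (m - j).choose k := by
  rcases le_or_gt (k + j) m with h | h
  · have h1 := Nat.choose_mul (n := m) (Nat.le_add_right k j)
    have h2 := Nat.choose_mul (n := m) (Nat.le_add_left j k)
    simp only [Nat.add_sub_cancel, Nat.add_sub_cancel_left] at h1 h2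
    rw [Nat.choose_symm_add] at h1
    omega
  · rcases le_or_gt k m with hk | hk
    · rcases le_or_gt j m with hj | hj
      · rw [Nat.choose_eq_zero_of_lt (show m - k < j by omega),
          Nat.choose_eq_zero_of_lt (show m - j < k by omega)]
        ring
      · rw [Nat.choose_eq_zero_of_lt hj, Nat.choose_eq_zero_of_lt (show m - k < j by omega)]
        ring
    · rcases le_or_gt j m with hj | hj
      · rw [Nat.choose_eq_zero_of_lt hk, Nat.choose_eq_zero_of_lt (show m - j < k by omega)]
        ring
      · rw [Nat.choose_eq_zero_of_lt hk, Nat.choose_eq_zero_of_lt hj]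
        ring

lemma key (m j : ℕ) :
    ∑ k ∈ Finset.range (m + 1), (-1 : ℤ) ^ k * (m.choose k : ℤ) * ((m - k).choose j : ℤ)
      = if j = m then 1 else 0 := by
  have step : ∀ k ∈ Finset.range (m + 1),
      (-1 : ℤ) ^ k * (m.choose k : ℤ) * ((m - k).choose j : ℤ)
        = (m.choose j : ℤ) * ((-1 : ℤ) ^ k * ((m - j).choose k : ℤ)) := by
    intro k _
    have h := tri m k j
    have h' : (m.choose k : ℤ) * ((m - k).choose j : ℤ)
        = (m.choose j : ℤ) * ((m - j).choose k : ℤ) := by exact_mod_cast h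
    rw [mul_assoc, h']; ring
  rw [Finset.sum_congr rfl step, ← Finset.mul_sum]
  rcases le_or_gt j m with hj | hj
  · have hsub : Finset.range (m - j + 1) ⊆ Finset.range (m + 1) := by
      apply Finset.range_subset_range.2; omega
    have : ∑ k ∈ Finset.range (m + 1), (-1 : ℤ) ^ k * ((m - j).choose k : ℤ)
        = ∑ k ∈ Finset.range (m - j + 1), (-1 : ℤ) ^ k * ((m - j).choose k : ℤ) := by
      refine (Finset.sum_subset hsub ?_).symm
      intro k _ hk
      simp only [Finset.mem_range, not_lt] at hk
      rw [Nat.choose_eq_zero_of_lt (by omega)]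
      ring
    rw [this, Int.alternating_sum_range_choose]
    rcases eq_or_ne j m with rfl | hne
    · simp
    · rw [if_neg (by omega), if_neg hne, mul_zero]
  · rw [Nat.choose_eq_zero_of_lt hj, if_neg (by omega)]
    simp

/-- ∑_{s=0}^{n} (-1)^s C(n-t-1, s-t-1) C(n-s, t') = (-1)^{t+1} δ_{t', n-t-1},
    for n ≥ 1, -1 ≤ t ≤ n-1 and any integer t'. -/
theorem binomial_sum_lemma_two (n : ℕ) (hn : 1 ≤ n) (t : ℤ) (ht1 : -1 ≤ t)
    (ht2 : t ≤ (n : ℤ) - 1) (t' : ℤ) :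
    ∑ s ∈ Finset.range (n + 1),
        (-1 : ℤ) ^ s * intChoose ((n : ℤ) - t - 1) ((s : ℤ) - t - 1) * intChoose ((n : ℤ) - s) t'
      = (-1 : ℤ) ^ (t + 1).toNat * (if t' = (n : ℤ) - t - 1 then 1 else 0) := by
  set T : ℕ := (t + 1).toNat with hTdef
  have hT : (T : ℤ) = t + 1 := Int.toNat_of_nonneg (by omega)
  have hTn : T ≤ n := by omega
  set m : ℕ := n - T with hmdef
  have hm : (m : ℤ) = (n : ℤ) - t - 1 := by push_cast; omega
  rcases lt_or_ge t' 0 with ht' | ht'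
  · rw [Finset.sum_eq_zero, if_neg (by omega), mul_zero]
    intro s _
    rw [intChoose_neg _ _ ht', mul_zero]
  · obtain ⟨j, rfl⟩ : ∃ j : ℕ, t' = (j : ℤ) := ⟨t'.toNat, (Int.toNat_of_nonneg ht').symm⟩
    have h1 : ∑ s ∈ Finset.range (n + 1),
        (-1 : ℤ) ^ s * intChoose ((n : ℤ) - t - 1) ((s : ℤ) - t - 1) * intChoose ((n : ℤ) - s) (j : ℤ)
        = ∑ s ∈ Finset.Ico T (n + 1),
        (-1 : ℤ) ^ s * intChoose ((n : ℤ) - t - 1) ((s : ℤ) - t - 1) * intChoose ((n : ℤ) - s) (j : ℤ) := by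
      rw [Finset.range_eq_Ico]
      refine (Finset.sum_subset (Finset.Ico_subset_Ico (by omega) le_rfl) ?_).symm
      intro s hs hs'
      simp only [Finset.mem_Ico] at hs hs'
      have : (s : ℤ) - t - 1 < 0 := by omega
      rw [intChoose_neg _ _ this, mul_zero, zero_mul]
    rw [h1, Finset.sum_Ico_eq_sum_range]
    have hrange : n + 1 - T = m + 1 := by omega
    rw [hrange]
    have h2 : ∀ k ∈ Finset.range (m + 1),
        (-1 : ℤ) ^ (T + k) * intChoose ((n : ℤ) - t - 1) (((T + k : ℕ) : ℤ) - t - 1)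
          * intChoose ((n : ℤ) - ((T + k : ℕ) : ℤ)) (j : ℤ)
        = (-1 : ℤ) ^ T * ((-1 : ℤ) ^ k * (m.choose k : ℤ) * (((m - k).choose j : ℕ) : ℤ)) := by
      intro k hk
      simp only [Finset.mem_range] at hk
      have e1 : ((T + k : ℕ) : ℤ) - t - 1 = (k : ℤ) := by push_cast; omega
      have e2 : (n : ℤ) - t - 1 = (m : ℤ) := hm.symm
      have e3 : (n : ℤ) - ((T + k : ℕ) : ℤ) = ((m - k : ℕ) : ℤ) := by push_cast; omega
      rw [e1, e2, e3, intChoose_natCast, intChoose_natCast, pow_add]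
      ring
    rw [Finset.sum_congr rfl h2, ← Finset.mul_sum, key m j]
    congr 1
    by_cases hjm : j = m
    · rw [if_pos hjm, if_pos (by rw [hjm, hm])]
    · rw [if_neg hjm, if_neg (fun hc => hjm (by exact_mod_cast hm ▸ hc))]
end

section
/- Let x be a nonzero element of a field. Define M_{n;k,l} = a·P_{n,k+1,l}(x) + b·P_{n,k+1,l-1}(x) for fixed field constants a, b. Then c·M_{n+1;k+1,l} − M_{n;k,l-1} = c·M_{n+1;k,l} holds (with c = x) for all integers n ≥ 1, 0 ≤ k ≤ n-1, 0 ≤ l ≤ n+1, with M_{n;k,l-1} interpreted as 0 for l = 0. -/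
/-- P_{n,k,l}(x) = ∑_{s=0}^{l} (-1)^s C(n-k,s) C(n-s-1,l-s) x^{n-2s}, as a function of
    an (invertible) field element x; for l < 0 all terms vanish (the sum degenerates to
    the single s = 0 term containing C(n-1,l) = 0), so P_{n,k,l} = 0 for l < 0. -/
def Ppoly {K : Type*} [Field K] (x : K) (n k l : ℤ) : K :=
  ∑ s ∈ Finset.range (l.toNat + 1),
    (-1 : K) ^ s * (intChoose (n - k) (s : ℤ) : K) *
      (intChoose (n - (s : ℤ) - 1) (l - (s : ℤ)) : K) * x ^ (n - 2 * (s : ℤ))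

/-- M_{n;k,l} = a·P_{n,k+1,l}(x) + b·P_{n,k+1,l-1}(x) for fixed constants a, b. -/
def Mmat {K : Type*} [Field K] (x a b : K) (n k : ℕ) (l : ℤ) : K :=
  a * Ppoly x (n : ℤ) ((k : ℤ) + 1) l + b * Ppoly x (n : ℤ) ((k : ℤ) + 1) (l - 1)

lemma intChoose_eq (a b : ℤ) (ha : 0 ≤ a) (hb : 0 ≤ b) :
    intChoose a b = (a.toNat.choose b.toNat : ℤ) := by
  unfold intChoose
  by_cases h : b ≤ a
  · simp [hb, h]
  · have : a.toNat < b.toNat := by omega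
    simp [Nat.choose_eq_zero_of_lt this, hb, h]

lemma intChoose_pascal (a b : ℤ) (ha : 0 ≤ a) :
    intChoose (a + 1) (b + 1) = intChoose a (b + 1) + intChoose a b := by
  by_cases hb : 0 ≤ b
  · rw [intChoose_eq _ _ (by omega) (by omega), intChoose_eq _ _ ha (by omega),
      intChoose_eq _ _ ha hb]
    have h1 : (a + 1).toNat = a.toNat + 1 := by omega
    have h2 : (b + 1).toNat = b.toNat + 1 := by omega
    rw [h1, h2, Nat.choose_succ_succ]
    push_cast; ring
  · by_cases hb1 : b = -1
    · subst hb1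
      rw [intChoose_neg a (-1) (by omega)]
      norm_num
      rw [intChoose_eq _ _ (by omega) le_rfl, intChoose_eq _ _ ha le_rfl]
      simp
    · rw [intChoose_neg _ _ (by omega), intChoose_neg _ _ (by omega),
        intChoose_neg _ _ (by omega)]
      ring

lemma Ppoly_rec {K : Type*} [Field K] (x : K) (hx : x ≠ 0) (n k l : ℤ) (hnk : k ≤ n) :
    x * (Ppoly x (n + 1) (k + 1) l - Ppoly x (n + 1) k l) = Ppoly x n k (l - 1) := by
  have hnk' : (0:ℤ) ≤ n - k := by omega
  unfold Ppoly
  rw [← Finset.sum_sub_distrib, Finset.mul_sum]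
  rcases le_or_gt l 0 with hl | hl
  · have h1 : l.toNat = 0 := by omega
    have h2 : (l - 1).toNat = 0 := by omega
    rw [h1, h2]
    simp only [zero_add, Finset.sum_range_one, Nat.cast_zero, pow_zero, one_mul,
      mul_zero, sub_zero]
    rw [intChoose_neg (n - 1) (l - 1) (by omega)]
    rw [show (n:ℤ) + 1 - (k + 1) = n - k from by ring]
    rw [intChoose_eq (n - k) 0 hnk' le_rfl, intChoose_eq (n + 1 - k) 0 (by omega) le_rfl]
    simp
  · obtain ⟨m, hm⟩ : ∃ m, l.toNat = m + 1 := ⟨(l - 1).toNat, by omega⟩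
    have hm' : (l - 1).toNat = m := by omega
    rw [hm, hm', Finset.sum_range_succ']
    have h0 : x * ((-1:K) ^ 0 * (intChoose (n + 1 - (k + 1)) ((0:ℕ) : ℤ) : K) *
        (intChoose (n + 1 - ((0:ℕ):ℤ) - 1) (l - ((0:ℕ):ℤ)) : K) * x ^ (n + 1 - 2 * ((0:ℕ):ℤ)) -
        (-1:K) ^ 0 * (intChoose (n + 1 - k) ((0:ℕ):ℤ) : K) *
        (intChoose (n + 1 - ((0:ℕ):ℤ) - 1) (l - ((0:ℕ):ℤ)) : K) * x ^ (n + 1 - 2 * ((0:ℕ):ℤ))) = 0 := by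
      rw [show (n:ℤ) + 1 - (k + 1) = n - k from by ring]
      rw [intChoose_eq (n - k) _ hnk' (by norm_num), intChoose_eq (n + 1 - k) _ (by omega) (by norm_num)]
      simp
    rw [h0, add_zero]
    apply Finset.sum_congr rfl
    intro i _
    push_cast
    rw [show (n:ℤ) + 1 - (k + 1) = n - k from by ring,
        show (n:ℤ) + 1 - k = (n - k) + 1 from by ring,
        intChoose_pascal (n - k) i hnk',
        show (n:ℤ) + 1 - ((i:ℤ) + 1) - 1 = n - i - 1 from by ring,
        show l - ((i:ℤ) + 1) = (l - 1) - i from by ring,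
        show (n:ℤ) - 2 * i = (n + 1 - 2 * ((i:ℤ) + 1)) + 1 from by ring,
        zpow_add_one₀ hx]
    push_cast
    ring

/-- The recurrence c·M_{n+1;k+1,l} − M_{n;k,l-1} = c·M_{n+1;k,l} (with c = x), for
    n ≥ 1, 0 ≤ k ≤ n-1, 0 ≤ l ≤ n+1; for l = 0 the term M_{n;k,l-1} vanishes
    automatically since P_{n,k,l} = 0 for l < 0. -/
theorem Mmat_recurrence_two {K : Type*} [Field K] (x : K) (hx0 : x ≠ 0)
    (a b : K) (n k l : ℕ) (hn : 1 ≤ n) (hk : k ≤ n - 1) (hl : l ≤ n + 1) :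
    x * Mmat x a b (n + 1) (k + 1) (l : ℤ) - Mmat x a b n k ((l : ℤ) - 1)
      = x * Mmat x a b (n + 1) k (l : ℤ) := by
  have hk' : (k : ℤ) + 1 ≤ (n : ℤ) := by omega
  have h1 := Ppoly_rec x hx0 (n : ℤ) ((k : ℤ) + 1) (l : ℤ) hk'
  have h2 := Ppoly_rec x hx0 (n : ℤ) ((k : ℤ) + 1) ((l : ℤ) - 1) hk'
  unfold Mmat
  push_cast
  linear_combination a * h1 + b * h2
end
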